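/- arXiv:2203.16511 — 2 statements merged into one kernel-verified Lean document; each statement's English description precedes it below -/
import Mathlib

section
/- Let $\hat a : [0,2\pi) \to [0,\infty)$ be a bounded measurable function with $A = \mathcal{F}^{-1} M_{\hat a} \mathcal{F}$ on $\ell^2(\mathbb{Z})$. The following are equivalent: (1) $0$ is an eigenvalue of $V_n^* A V_n$ for some $n$; (2) $0$ is an eigenvalue of $V_n^* A V_n$ for every $n \ge 1$; (3) $A = 0$; (4) $\hat a = 0$ almost everywhere. -/
set_option maxHeartbeats 1000000

open MeasureTheory Finset

/-- Lebesgue measure restricted to `[0, 2π)`. -/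
noncomputable def μ2π : Measure ℝ := volume.restrict (Set.Ico 0 (2 * Real.pi))

/-- The `n×n` compression matrix `(V_n^* A V_n)_{j,l} = ⟨1_{j}, A 1_{l}⟩`. -/
noncomputable def compressMat (A : lp (fun _ : ℤ => ℂ) 2 →L[ℂ] lp (fun _ : ℤ => ℂ) 2)
    (n : ℕ) : Matrix (Fin n) (Fin n) ℂ :=
  fun j l => inner ℂ (lp.single 2 (j : ℤ) (1 : ℂ)) (A (lp.single 2 (l : ℤ) (1 : ℂ)))

lemma countable_exp_eq (r : ℂ) :
    Set.Countable {x : ℝ | Complex.exp (Complex.I * x) = r} := by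
  rcases Set.eq_empty_or_nonempty {x : ℝ | Complex.exp (Complex.I * x) = r} with h | ⟨x0, hx0⟩
  · simp [h]
  · apply Set.Countable.mono _ (Set.countable_range fun n : ℤ => x0 + 2 * Real.pi * n)
    intro x hx
    have hx : Complex.exp (Complex.I * x) = r := hx
    have hx0 : Complex.exp (Complex.I * x0) = r := hx0
    have h1 : Complex.exp (Complex.I * x - Complex.I * x0) = 1 := by
      rw [Complex.exp_sub, hx, hx0, div_self]
      rw [← hx0]; exact Complex.exp_ne_zero _
    rw [Complex.exp_eq_one_iff] at h1
    obtain ⟨n, hn⟩ := h1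
    have h2 : (Complex.I : ℂ) * ((x : ℂ) - x0) = Complex.I * ((n : ℂ) * (2 * Real.pi)) := by
      rw [mul_sub]; rw [hn]; ring
    have h3 : ((x : ℂ) - x0) = (n : ℂ) * (2 * Real.pi) :=
      mul_left_cancel₀ Complex.I_ne_zero h2
    have h4 : (x : ℝ) - x0 = (n : ℝ) * (2 * Real.pi) := by exact_mod_cast h3
    simp only [Set.mem_range]
    exact ⟨n, by linear_combination -h4⟩

lemma countable_polyzero (q : Polynomial ℂ) (hq : q ≠ 0) :
    Set.Countable {x : ℝ | q.eval (Complex.exp (Complex.I * x)) = 0} := by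
  have hsub : {x : ℝ | q.eval (Complex.exp (Complex.I * x)) = 0} ⊆
      ⋃ r ∈ (q.roots.toFinset : Set ℂ), {x : ℝ | Complex.exp (Complex.I * x) = r} := by
    intro x hx
    refine Set.mem_iUnion₂.mpr ⟨Complex.exp (Complex.I * x), ?_, rfl⟩
    simp only [Finset.mem_coe, Multiset.mem_toFinset]
    exact Polynomial.mem_roots'.mpr ⟨hq, hx⟩
  exact Set.Countable.mono hsub
    (Set.Countable.biUnion (Set.Finite.countable (Finset.finite_toSet _))
      fun r _ => countable_exp_eq r)

lemma Lp_coeFn_sum {ι : Type*} (s : Finset ι) (f : ι → Lp ℂ 2 μ2π) :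
    ((∑ i ∈ s, f i : Lp ℂ 2 μ2π) : ℝ → ℂ) =ᵐ[μ2π] fun x => ∑ i ∈ s, (f i : ℝ → ℂ) x := by
  classical
  induction s using Finset.induction_on with
  | empty => simp only [Finset.sum_empty]; exact MeasureTheory.Lp.coeFn_zero (E := ℂ) (p := 2) (μ := μ2π)
  | insert a s hns ih =>
    rw [Finset.sum_insert hns]
    filter_upwards [MeasureTheory.Lp.coeFn_add (f a) (∑ i ∈ s, f i), ih] with x h1 h2
    rw [h1, Pi.add_apply, h2, Finset.sum_insert hns]

theorem compression_zero_eigenvalue_TFAE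
    (a : ℝ → ℝ) (ha_meas : Measurable a) (ha_nonneg : ∀ x, 0 ≤ a x)
    (ha_bdd : ∃ C, ∀ x, a x ≤ C)
    (F : lp (fun _ : ℤ => ℂ) 2 ≃ₗᵢ[ℂ] Lp ℂ 2 μ2π)
    (hF : ∀ k : ℤ, (F (lp.single 2 k (1 : ℂ)) : ℝ → ℂ)
      =ᵐ[μ2π] fun x => Complex.exp (Complex.I * k * x) / Real.sqrt (2 * Real.pi))
    (A : lp (fun _ : ℤ => ℂ) 2 →L[ℂ] lp (fun _ : ℤ => ℂ) 2)
    (hA : ∀ ψ, (F (A ψ) : ℝ → ℂ) =ᵐ[μ2π] fun x => (a x : ℂ) * (F ψ : ℝ → ℂ) x) :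
    [ (∃ n : ℕ, 1 ≤ n ∧ ∃ ψ : Fin n → ℂ, ψ ≠ 0 ∧ (compressMat A n).mulVec ψ = 0),
      (∀ n : ℕ, 1 ≤ n → ∃ ψ : Fin n → ℂ, ψ ≠ 0 ∧ (compressMat A n).mulVec ψ = 0),
      A = 0,
      a =ᵐ[μ2π] 0 ].TFAE := by
  tfae_have 1 → 4 := by
    rintro ⟨n, hn, ψ, hψ, hmul⟩
    classical
    set φ : lp (fun _ : ℤ => ℂ) 2 := ∑ j : Fin n, ψ j • lp.single 2 ((j : ℤ)) (1 : ℂ) with hφ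
    -- Step A : ⟪φ, A φ⟫ = 0
    have hinner : (inner ℂ φ (A φ) : ℂ) = 0 := by
      have : (inner ℂ φ (A φ) : ℂ)
          = ∑ j : Fin n, (starRingEnd ℂ) (ψ j) * ((compressMat A n).mulVec ψ j) := by
        rw [hφ, map_sum, sum_inner]
        refine Finset.sum_congr rfl fun j _ => ?_
        rw [inner_smul_left, Matrix.mulVec, dotProduct]
        congr 1
        rw [inner_sum]
        refine Finset.sum_congr rfl fun l _ => ?_
        rw [A.map_smul, inner_smul_right]
        simp only [compressMat]
        ring
      rw [this, hmul]
      simp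
    -- Step B/C : ∫ a x * normSq (F φ x) = 0
    have hinner2 : (inner ℂ (F φ) (F (A φ)) : ℂ) = 0 := by
      rw [LinearIsometryEquiv.inner_map_map]; exact hinner
    set g : ℝ → ℝ := fun x => a x * Complex.normSq ((F φ : ℝ → ℂ) x) with hg
    have hgnonneg : ∀ x, 0 ≤ g x := fun x =>
      mul_nonneg (ha_nonneg x) (Complex.normSq_nonneg _)
    have hcongr : (fun x => (inner ℂ ((F φ : ℝ → ℂ) x) ((F (A φ) : ℝ → ℂ) x) : ℂ))
        =ᵐ[μ2π] fun x => (g x : ℂ) := by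
      filter_upwards [hA φ] with x hx
      rw [hx]
      simp only [RCLike.inner_apply', hg]
      have h5 : (starRingEnd ℂ) ((F φ : ℝ → ℂ) x) * ((a x : ℂ) * (F φ : ℝ → ℂ) x)
          = (a x : ℂ) * ((F φ : ℝ → ℂ) x * (starRingEnd ℂ) ((F φ : ℝ → ℂ) x)) := by ring
      rw [h5, Complex.mul_conj]
      norm_cast
    have hint : Integrable (fun x => (inner ℂ ((F φ : ℝ → ℂ) x) ((F (A φ) : ℝ → ℂ) x) : ℂ)) μ2π :=
      L2.integrable_inner (𝕜 := ℂ) (F φ) (F (A φ))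
    have hgint : Integrable (fun x => (g x : ℂ)) μ2π := hint.congr hcongr
    have hintzero : ∫ x, (g x : ℂ) ∂μ2π = 0 := by
      rw [← integral_congr_ae hcongr, ← L2.inner_def, hinner2]
    have hgreal : ∫ x, g x ∂μ2π = 0 := by
      have h := integral_re hgint
      rw [hintzero] at h
      simpa using h
    have hgzero : g =ᵐ[μ2π] 0 := by
      have hgint' : Integrable g μ2π := by
        have := hgint.re
        refine this.congr (Filter.Eventually.of_forall fun x => ?_)
        simp
      exact (integral_eq_zero_iff_of_nonneg hgnonneg hgint').mp hgreal
    -- Step D : F φ equals the trig polynomial a.e.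
    set q : Polynomial ℂ := ∑ j : Fin n, Polynomial.monomial (j : ℕ) (ψ j) with hq
    have hqne : q ≠ 0 := by
      obtain ⟨j0, hj0⟩ := Function.ne_iff.mp hψ
      intro hq0
      have : q.coeff (j0 : ℕ) = ψ j0 := by
        rw [hq, Polynomial.finset_sum_coeff]
        rw [Finset.sum_eq_single j0]
        · simp [Polynomial.coeff_monomial]
        · intro b _ hb
          rw [Polynomial.coeff_monomial, if_neg]
          exact fun h => hb (Fin.ext h)
        · simp
      rw [hq0] at this
      simp at this
      exact hj0 this.symm
    have hFφ : (F φ : ℝ → ℂ) =ᵐ[μ2π]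
        fun x => q.eval (Complex.exp (Complex.I * x)) / Real.sqrt (2 * Real.pi) := by
      have hsum : (F φ : ℝ → ℂ) =ᵐ[μ2π]
          fun x => ∑ j : Fin n, ((ψ j • F (lp.single 2 ((j : ℤ)) (1 : ℂ)) : Lp ℂ 2 μ2π) : ℝ → ℂ) x := by
        rw [hφ, map_sum]
        simp only [LinearIsometryEquiv.map_smul]
        exact Lp_coeFn_sum Finset.univ _
      have hall : ∀ᵐ x ∂μ2π, ∀ j : Fin n,
          ((ψ j • F (lp.single 2 ((j : ℤ)) (1 : ℂ)) : Lp ℂ 2 μ2π) : ℝ → ℂ) x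
            = ψ j * (Complex.exp (Complex.I * ((j : ℤ) : ℂ) * x) / Real.sqrt (2 * Real.pi)) := by
        rw [ae_all_iff]
        intro j
        filter_upwards [MeasureTheory.Lp.coeFn_smul (ψ j) (F (lp.single 2 ((j : ℤ)) (1 : ℂ))),
          hF (j : ℤ)] with x h1 h2
        rw [h1, Pi.smul_apply, smul_eq_mul, h2]
      filter_upwards [hsum, hall] with x h1 h2
      rw [h1]
      rw [Finset.sum_congr rfl fun j _ => h2 j]
      rw [hq, Polynomial.eval_finset_sum, Finset.sum_div]
      refine Finset.sum_congr rfl fun j _ => ?_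
      rw [Polynomial.eval_monomial]
      have : Complex.exp (Complex.I * ((j : ℤ) : ℂ) * x)
          = Complex.exp (Complex.I * x) ^ (j : ℕ) := by
        rw [← Complex.exp_nat_mul]
        congr 1
        push_cast
        ring
      rw [this]
      ring
    -- Step E : conclude a = 0 a.e.
    have hZ : μ2π {x : ℝ | q.eval (Complex.exp (Complex.I * x)) = 0} = 0 := by
      have h1 : volume {x : ℝ | q.eval (Complex.exp (Complex.I * x)) = 0} = 0 :=
        Set.Countable.measure_zero (countable_polyzero q hqne) volume
      refine le_antisymm ?_ zero_le
      calc μ2π {x : ℝ | q.eval (Complex.exp (Complex.I * x)) = 0}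
          ≤ volume {x : ℝ | q.eval (Complex.exp (Complex.I * x)) = 0} :=
            Measure.restrict_le_self _
        _ = 0 := h1
    have hZ' : ∀ᵐ (x : ℝ) ∂μ2π, q.eval (Complex.exp (Complex.I * x)) ≠ 0 := by
      rw [MeasureTheory.ae_iff]
      simpa using hZ
    filter_upwards [hgzero, hFφ, hZ'] with x h1 h2 h3
    have hgx : g x = 0 := h1
    rw [hg] at hgx
    have hFx : Complex.normSq ((F φ : ℝ → ℂ) x) ≠ 0 := by
      rw [h2]
      rw [Complex.normSq_eq_norm_sq]
      apply pow_ne_zero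
      rw [ne_eq, norm_eq_zero]
      apply div_ne_zero h3
      simp only [ne_eq, Complex.ofReal_eq_zero]
      positivity
    have := mul_eq_zero.mp hgx
    simp only [Pi.zero_apply]
    tauto
  tfae_have 4 → 3 := by
    intro h4
    refine ContinuousLinearMap.ext fun ψ => ?_
    have h1 : (F (A ψ) : ℝ → ℂ) =ᵐ[μ2π] 0 := by
      filter_upwards [hA ψ, h4] with x hx hax
      simp only [Pi.zero_apply] at hax ⊢
      rw [hx, hax]
      simp
    have h2 : F (A ψ) = 0 := MeasureTheory.Lp.eq_zero_iff_ae_eq_zero.mpr h1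
    have h3 : A ψ = 0 := by
      have := congrArg F.symm h2
      simpa using this
    simpa using h3
  tfae_have 3 → 2 := by
    intro h3 n hn
    refine ⟨fun _ => 1, ?_, ?_⟩
    · intro h
      have := congrFun h ⟨0, hn⟩
      simp at this
    · funext j
      simp [Matrix.mulVec, dotProduct, compressMat, h3]
  tfae_have 2 → 1 := fun h2 => ⟨1, le_rfl, h2 1 le_rfl⟩
  tfae_finish
end

section
/- Let $\hat a : [0,2\pi) \to [0,1]$ be measurable and identically $0$ on an interval $[\alpha,\omega]$, let $0 < \delta < (\omega-\alpha)/2$, and set $A = \mathcal{F}^{-1}M_{\hat a}\mathcal{F}$, $A_n = V_n^* A V_n$, and $E_{n,\delta} = \sum_{k : 2\pi k/n \in [\alpha+\delta,\omega-\delta]} |\mathcal{F}_n^* \mathbf{1}_{\{k\}}\rangle\langle \mathcal{F}_n^* \mathbf{1}_{\{k\}}|$. Then $E_{n,\delta}$ is an orthogonal projection on $\mathbb{C}^n$ and $\mathrm{Tr}(E_{n,\delta} A_n) \le \mathrm{Tr}(E_{n,\delta}) \cdot \frac{1}{n\sin^2(\delta/2)}$. -/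
open MeasureTheory Finset Matrix

/-- The `n`-dimensional discrete Fourier transform matrix. -/
noncomputable def dftMat (n : ℕ) : Matrix (Fin n) (Fin n) ℂ :=
  fun j k => Complex.exp (2 * Real.pi * Complex.I * j * k / n) / Real.sqrt n

/-- The spectral projection `E_{n,δ} = ∑_{k : 2πk/n ∈ [α+δ,ω-δ]} |F_n^* 1_k⟩⟨F_n^* 1_k|`. -/
noncomputable def Eproj (n : ℕ) (α ω δ : ℝ) : Matrix (Fin n) (Fin n) ℂ :=
  ∑ k ∈ Finset.univ.filter
      (fun k : Fin n => 2 * Real.pi * (k : ℝ) / n ∈ Set.Icc (α + δ) (ω - δ)),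
    Matrix.vecMulVec (fun j => (dftMat n)ᴴ j k) (fun j => star ((dftMat n)ᴴ j k))

/-! ### Auxiliary lemmas -/

lemma dft_conj (n : ℕ) (j k : Fin n) :
    (dftMat n)ᴴ j k = Complex.exp (-(2 * Real.pi * Complex.I * j * k / n)) / Real.sqrt n := by
  simp only [Matrix.conjTranspose_apply, dftMat, RCLike.star_def, map_div₀, Complex.conj_ofReal,
    ← Complex.exp_conj]
  congr 2
  simp [map_div₀, map_ofNat]
  ring

lemma dft_orth (n : ℕ) (hn : 1 ≤ n) (k k' : Fin n) :
    ∑ j : Fin n, star ((dftMat n)ᴴ j k) * (dftMat n)ᴴ j k'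
      = if k = k' then 1 else 0 := by
  have hn0 : (n:ℂ) ≠ 0 := by exact_mod_cast (Nat.pos_of_ne_zero (by omega)).ne'
  set d : ℤ := (k:ℤ) - (k':ℤ) with hd
  set r : ℂ := Complex.exp (2 * Real.pi * Complex.I * d / n) with hr
  have hterm : ∀ j : Fin n, star ((dftMat n)ᴴ j k) * (dftMat n)ᴴ j k' = r ^ (j:ℕ) / n := by
    intro j
    rw [dft_conj, dft_conj]
    simp only [RCLike.star_def, map_div₀, Complex.conj_ofReal, ← Complex.exp_conj]
    have h1 : (starRingEnd ℂ) (-(2 * Real.pi * Complex.I * j * k / n)) =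
        2 * Real.pi * Complex.I * j * k / n := by
      simp [map_div₀, map_ofNat]; ring
    rw [h1]
    have h2 : Complex.exp (2 * ↑Real.pi * Complex.I * ↑↑j * ↑↑k / ↑n) *
        Complex.exp (-(2 * ↑Real.pi * Complex.I * ↑↑j * ↑↑k' / ↑n)) = r ^ (j:ℕ) := by
      rw [← Complex.exp_add, hr, ← Complex.exp_nat_mul]
      congr 1
      push_cast [hd]
      ring
    have hs : ((Real.sqrt n : ℝ) : ℂ) * ((Real.sqrt n : ℝ) : ℂ) = (n : ℂ) := by
      norm_cast
      exact Real.mul_self_sqrt (Nat.cast_nonneg n)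
    rw [div_mul_div_comm, h2, hs]
  rw [Finset.sum_congr rfl (fun j _ => hterm j), ← Finset.sum_div,
    Fin.sum_univ_eq_sum_range (fun j => r ^ j)]
  by_cases hkk : k = k'
  · subst hkk
    have : r = 1 := by
      rw [hr]
      simp [hd]
    simp [this, hn0]
  · rw [if_neg hkk]
    have hdne : d ≠ 0 := by
      simp only [hd, sub_ne_zero]
      exact_mod_cast fun h => hkk (Fin.ext (by exact_mod_cast h))
    have hr1 : r ≠ 1 := by
      rw [hr]
      intro h
      rw [Complex.exp_eq_one_iff] at h
      obtain ⟨m, hm⟩ := h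
      have hdm : (d : ℂ) = m * n := by
        have h2pi : (2 * Real.pi * Complex.I : ℂ) ≠ 0 := by
          simp [Complex.ext_iff, Real.pi_ne_zero]
        field_simp at hm
        exact mul_left_cancel₀ h2pi (show (2*Real.pi*Complex.I) * (d:ℂ)
          = (2*Real.pi*Complex.I) * ((m:ℂ)*n) by linear_combination (2*Real.pi*Complex.I) * hm)
      have hdmz : d = m * n := by exact_mod_cast hdm
      have hj := k.isLt; have hj' := k'.isLt
      have hb1 : -(n:ℤ) < d := by rw [hd]; omega
      have hb2 : d < n := by rw [hd]; omega
      rcases lt_trichotomy m 0 with h | h | h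
      · have : d ≤ -(n:ℤ) := by rw [hdmz]; nlinarith
        omega
      · simp [h] at hdmz; exact hdne hdmz
      · have : (n:ℤ) ≤ d := by rw [hdmz]; nlinarith
        omega
    rw [geom_sum_eq hr1]
    have hrn : r ^ n = 1 := by
      rw [hr, ← Complex.exp_nat_mul]
      have : (n:ℂ) * (2 * Real.pi * Complex.I * d / n) = d * (2 * Real.pi * Complex.I) := by
        field_simp
      rw [this, Complex.exp_int_mul_two_pi_mul_I]
    rw [hrn]
    simp

lemma sin_lower {δ u : ℝ} (hδ : 0 < δ) (h1 : δ/2 ≤ |u|) (h2 : |u| ≤ Real.pi - δ/2) :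
    Real.sin (δ/2) ≤ |Real.sin u| := by
  have hπ : 0 < Real.pi := Real.pi_pos
  have hv1 : δ/2 ≤ Real.pi - δ/2 := le_trans h1 h2
  have habs : |Real.sin u| = Real.sin |u| := by
    rcases abs_cases u with ⟨h, hu⟩ | ⟨h, hu⟩
    · rw [h]
      exact abs_of_nonneg (Real.sin_nonneg_of_nonneg_of_le_pi hu (by nlinarith [le_abs_self u]))
    · rw [h, Real.sin_neg]
      rw [abs_of_nonpos]
      exact Real.sin_nonpos_of_nonpos_of_neg_pi_le (le_of_lt hu) (by nlinarith [neg_abs_le u])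
  rw [habs]
  rcases le_or_gt |u| (Real.pi/2) with h | h
  · exact Real.sin_le_sin_of_le_of_le_pi_div_two (by linarith) h h1
  · rw [show Real.sin |u| = Real.sin (Real.pi - |u|) from (Real.sin_pi_sub _).symm]
    exact Real.sin_le_sin_of_le_of_le_pi_div_two (by linarith) (by linarith) (by linarith)

lemma geom_exp_bound (n : ℕ) (t : ℝ) (hs : Real.sin (t/2) ≠ 0) :
    ‖∑ l ∈ Finset.range n, Complex.exp ((t:ℂ) * Complex.I) ^ l‖ ≤ 1 / |Real.sin (t/2)| := by
  set r := Complex.exp ((t:ℂ) * Complex.I) with hr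
  have habs : ‖r‖ = 1 := Complex.norm_exp_ofReal_mul_I t
  have hnormsq : ‖r - 1‖^2 = (2 * |Real.sin (t/2)|)^2 := by
    have hre : (r - 1).re = Real.cos t - 1 := by
      simp [hr, Complex.exp_ofReal_mul_I_re]
    have him : (r - 1).im = Real.sin t := by
      simp [hr, Complex.exp_ofReal_mul_I_im]
    rw [Complex.sq_norm, Complex.normSq_apply, hre, him]
    have h1 : Real.sin (t/2) ^ 2 = 1/2 - Real.cos (2 * (t/2)) / 2 := Real.sin_sq_eq_half_sub _
    rw [mul_pow, sq_abs]
    have h2 : Real.sin t ^ 2 = 1 - Real.cos t ^ 2 := Real.sin_sq t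
    rw [show (2:ℝ) * (t/2) = t by ring] at h1
    nlinarith [h1, h2]
  have hspos : 0 < |Real.sin (t/2)| := abs_pos.mpr hs
  have hlow : 2 * |Real.sin (t/2)| ≤ ‖r - 1‖ := by
    nlinarith [norm_nonneg (r - 1)]
  have hr1 : r ≠ 1 := by
    intro h
    rw [h, sub_self, norm_zero] at hlow
    nlinarith
  rw [geom_sum_eq hr1, norm_div]
  have hnum : ‖r ^ n - 1‖ ≤ 2 := by
    calc ‖r ^ n - 1‖ ≤ ‖r ^ n‖ + ‖(1:ℂ)‖ := norm_sub_le _ _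
    _ = 2 := by
        rw [norm_pow]
        simp only [habs, one_pow]
        norm_num
  calc ‖r ^ n - 1‖ / ‖r - 1‖ ≤ 2 / (2 * |Real.sin (t/2)|) :=
        div_le_div₀ (by norm_num) hnum (by positivity) hlow
  _ = 1 / |Real.sin (t/2)| := by
      rw [div_mul_eq_div_div]
      norm_num

/-- The rank-one projection onto the `k`-th column of `Fₙ*`. -/
noncomputable def Pk (n : ℕ) (k : Fin n) : Matrix (Fin n) (Fin n) ℂ :=
  Matrix.vecMulVec (fun j => (dftMat n)ᴴ j k) (fun j => star ((dftMat n)ᴴ j k))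

lemma Eproj_eq (n : ℕ) (α ω δ : ℝ) : Eproj n α ω δ =
    ∑ k ∈ Finset.univ.filter
      (fun k : Fin n => 2 * Real.pi * (k : ℝ) / n ∈ Set.Icc (α + δ) (ω - δ)), Pk n k := rfl

lemma Pk_herm (n : ℕ) (k : Fin n) : (Pk n k).conjTranspose = Pk n k := by
  ext i j
  simp only [Pk, Matrix.conjTranspose_apply, Matrix.vecMulVec_apply, star_mul', star_star]
  ring

lemma Eproj_herm (n : ℕ) (α ω δ : ℝ) : (Eproj n α ω δ).IsHermitian := by
  unfold Matrix.IsHermitian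
  rw [Eproj_eq, Matrix.conjTranspose_sum]
  exact Finset.sum_congr rfl fun k _ => Pk_herm n k

lemma PP (n : ℕ) (hn : 1 ≤ n) (k k' : Fin n) :
    Pk n k * Pk n k' = if k = k' then Pk n k else 0 := by
  ext i j
  rw [Matrix.mul_apply]
  simp only [Pk, Matrix.vecMulVec_apply]
  have : ∀ m : Fin n, (dftMat n)ᴴ i k * star ((dftMat n)ᴴ m k) *
      ((dftMat n)ᴴ m k' * star ((dftMat n)ᴴ j k'))
      = ((dftMat n)ᴴ i k * star ((dftMat n)ᴴ j k')) *
        (star ((dftMat n)ᴴ m k) * (dftMat n)ᴴ m k') := fun m => by ring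
  rw [Finset.sum_congr rfl fun m _ => this m, ← Finset.mul_sum, dft_orth n hn k k']
  split_ifs with h
  · subst h; simp [Matrix.vecMulVec_apply, Matrix.conjTranspose_apply]
  · simp

lemma Eproj_idem (n : ℕ) (hn : 1 ≤ n) (α ω δ : ℝ) :
    Eproj n α ω δ * Eproj n α ω δ = Eproj n α ω δ := by
  rw [Eproj_eq, Finset.sum_mul_sum]
  rw [Finset.sum_congr rfl fun k hk => Finset.sum_congr rfl fun k' hk' => PP n hn k k']
  exact Finset.sum_congr rfl fun k hk => by rw [Finset.sum_ite_eq _ k (fun _ => Pk n k), if_pos hk]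

lemma Pk_trace (n : ℕ) (hn : 1 ≤ n) (k : Fin n) : (Pk n k).trace = 1 := by
  rw [Matrix.trace]
  have : ∀ j : Fin n, (Pk n k).diag j = star ((dftMat n)ᴴ j k) * (dftMat n)ᴴ j k := by
    intro j; simp only [Matrix.diag, Pk, Matrix.vecMulVec_apply]; ring
  rw [Finset.sum_congr rfl fun j _ => this j, dft_orth n hn k k, if_pos rfl]

lemma Eproj_trace (n : ℕ) (hn : 1 ≤ n) (α ω δ : ℝ) :
    (Eproj n α ω δ).trace = ((Finset.univ.filter
      (fun k : Fin n => 2 * Real.pi * (k : ℝ) / n ∈ Set.Icc (α + δ) (ω - δ))).card : ℂ) := by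
  rw [Eproj_eq, Matrix.trace_sum,
    Finset.sum_congr rfl fun k _ => Pk_trace n hn k, Finset.sum_const, nsmul_eq_mul, mul_one]

lemma Etrace_mul (n : ℕ) (α ω δ : ℝ) (M : Matrix (Fin n) (Fin n) ℂ) :
    (Eproj n α ω δ * M).trace = ∑ k ∈ Finset.univ.filter
      (fun k : Fin n => 2 * Real.pi * (k : ℝ) / n ∈ Set.Icc (α + δ) (ω - δ)),
      (Pk n k * M).trace := by
  rw [Eproj_eq, Finset.sum_mul, Matrix.trace_sum]

lemma Pk_trace_mul (n : ℕ) (k : Fin n) (M : Matrix (Fin n) (Fin n) ℂ) :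
    (Pk n k * M).trace = ∑ l : Fin n, ∑ j : Fin n,
      star ((dftMat n)ᴴ l k) * (dftMat n)ᴴ j k * M l j := by
  rw [Matrix.trace]
  simp only [Matrix.diag, Matrix.mul_apply, Pk, Matrix.vecMulVec_apply]
  rw [Finset.sum_comm]
  exact Finset.sum_congr rfl fun l _ => Finset.sum_congr rfl fun j _ => by ring

lemma LpcoeFn_sum {ι : Type*} (s : Finset ι) (f : ι → Lp ℂ 2 μ2π) :
    (↑↑(∑ l ∈ s, f l) : ℝ → ℂ) =ᵐ[μ2π] fun x => ∑ l ∈ s, (f l : ℝ → ℂ) x := by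
  induction s using Finset.cons_induction with
  | empty =>
      simp only [Finset.sum_empty]
      filter_upwards [Lp.coeFn_zero ℂ 2 μ2π] with x hx using hx
  | cons a s ha ih =>
      rw [Finset.sum_cons]
      filter_upwards [Lp.coeFn_add (f a) (∑ l ∈ s, f l), ih] with x h1 h2
      rw [h1]
      simp only [Pi.add_apply, Finset.sum_cons, h2]

theorem projection_trace_bound
    (a : ℝ → ℝ) (ha_meas : Measurable a) (ha01 : ∀ x, a x ∈ Set.Icc (0:ℝ) 1)
    (α ω : ℝ) (hα : 0 ≤ α) (hω : ω < 2 * Real.pi)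
    (hzero : ∀ x ∈ Set.Icc α ω, a x = 0)
    (δ : ℝ) (hδ0 : 0 < δ) (hδ : δ < (ω - α) / 2)
    (F : lp (fun _ : ℤ => ℂ) 2 ≃ₗᵢ[ℂ] Lp ℂ 2 μ2π)
    (hF : ∀ k : ℤ, (F (lp.single 2 k (1 : ℂ)) : ℝ → ℂ)
      =ᵐ[μ2π] fun x => Complex.exp (Complex.I * k * x) / Real.sqrt (2 * Real.pi))
    (A : lp (fun _ : ℤ => ℂ) 2 →L[ℂ] lp (fun _ : ℤ => ℂ) 2)
    (hA : ∀ ψ, (F (A ψ) : ℝ → ℂ) =ᵐ[μ2π] fun x => (a x : ℂ) * (F ψ : ℝ → ℂ) x)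
    (n : ℕ) (hn : 1 ≤ n) :
    (Eproj n α ω δ).IsHermitian ∧
    Eproj n α ω δ * Eproj n α ω δ = Eproj n α ω δ ∧
    ((Eproj n α ω δ * compressMat A n).trace).im = 0 ∧
    ((Eproj n α ω δ * compressMat A n).trace).re
      ≤ ((Eproj n α ω δ).trace).re * (1 / (n * Real.sin (δ / 2) ^ 2)) := by
  classical
  have hπ : 0 < Real.pi := Real.pi_pos
  have hδπ : δ < Real.pi := by nlinarith
  have hsinpos : 0 < Real.sin (δ/2) := Real.sin_pos_of_pos_of_lt_pi (by linarith) (by linarith)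
  have hnR : (0:ℝ) < n := by exact_mod_cast hn
  set C : ℝ := (1 / Real.sin (δ/2))^2 / (n * (2 * Real.pi)) with hC
  have hCnonneg : 0 ≤ C := by positivity
  set S : Finset (Fin n) := Finset.univ.filter
      (fun k : Fin n => 2 * Real.pi * (k : ℝ) / n ∈ Set.Icc (α + δ) (ω - δ)) with hS
  -- the key analytic estimate, for each k in S
  have key : ∀ k ∈ S, ∃ I : ℝ, (Pk n k * compressMat A n).trace = (I:ℂ) ∧
      I ≤ 1/(n * Real.sin (δ/2)^2) := by
    intro k hk
    rw [hS, Finset.mem_filter] at hk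
    obtain ⟨-, hk⟩ := hk
    rw [Set.mem_Icc] at hk
    set θ : ℝ := 2 * Real.pi * (k:ℝ) / n with hθ
    set u : Fin n → ℂ := fun l => (dftMat n)ᴴ l k with hu
    set e : ℤ → lp (fun _ : ℤ => ℂ) 2 := fun m => lp.single 2 m (1:ℂ) with he
    set ψ : lp (fun _ : ℤ => ℂ) 2 := ∑ l : Fin n, u l • e (l : ℤ) with hψ
    have hAψ : A ψ = ∑ j : Fin n, u j • A (e (j:ℤ)) := by
      rw [hψ, map_sum]
      exact Finset.sum_congr rfl fun j _ => A.map_smul _ _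
    have h1 : (inner ℂ ψ (A ψ) : ℂ) = (Pk n k * compressMat A n).trace := by
      rw [Pk_trace_mul, hψ, hAψ, sum_inner]
      refine Finset.sum_congr rfl fun l _ => ?_
      rw [inner_smul_left, inner_sum, Finset.mul_sum]
      refine Finset.sum_congr rfl fun j _ => ?_
      rw [inner_smul_right]
      simp only [compressMat, he, RCLike.star_def, hu]
      ring
    -- the explicit a.e. representative of F ψ
    set g : ℝ → ℂ := fun x => ∑ l : Fin n,
        u l * (Complex.exp (Complex.I * (l:ℤ) * x) / Real.sqrt (2*Real.pi)) with hgdef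
    have hg : (F ψ : ℝ → ℂ) =ᵐ[μ2π] g := by
      have hFψ : F ψ = ∑ l : Fin n, u l • F (e (l:ℤ)) := by
        rw [hψ, map_sum]
        exact Finset.sum_congr rfl fun l _ => F.map_smul _ _
      rw [hFψ]
      have hcoe := LpcoeFn_sum (Finset.univ : Finset (Fin n)) (fun l => u l • F (e (l:ℤ)))
      have hall : ∀ᵐ x ∂μ2π, ∀ l : Fin n, (↑↑(u l • F (e (l:ℤ))) : ℝ → ℂ) x
          = u l * (Complex.exp (Complex.I * (l:ℤ) * x) / Real.sqrt (2*Real.pi)) := by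
        rw [MeasureTheory.ae_all_iff]
        intro l
        filter_upwards [Lp.coeFn_smul (u l) (F (e (l:ℤ))), hF (l:ℤ)] with x h1 h2
        rw [h1]
        simp only [Pi.smul_apply, smul_eq_mul, he, h2]
      filter_upwards [hcoe, hall] with x h1 h2
      rw [h1, hgdef]
      exact Finset.sum_congr rfl fun l _ => h2 l
    have hAg : (F (A ψ) : ℝ → ℂ) =ᵐ[μ2π] fun x => (a x : ℂ) * g x := by
      filter_upwards [hA ψ, hg] with x h1 h2
      rw [h1, h2]
    set h : ℝ → ℝ := fun x => a x * Complex.normSq (g x) with hhdef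
    have hptwise : ∀ x, (starRingEnd ℂ) (g x) * ((a x : ℂ) * g x) = ((h x : ℝ) : ℂ) := by
      intro x
      rw [hhdef]
      have hq : (starRingEnd ℂ) (g x) * ((a x : ℝ) * g x)
          = ((a x : ℝ) : ℂ) * ((Complex.normSq (g x) : ℝ) : ℂ) := by
        rw [Complex.normSq_eq_conj_mul_self]
        ring
      rw [hq, ← Complex.ofReal_mul]
    have hinner : (inner ℂ (F ψ) (F (A ψ)) : ℂ) = ((∫ x, h x ∂μ2π : ℝ) : ℂ) := by
      rw [MeasureTheory.L2.inner_def,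
        show ((∫ x, h x ∂μ2π : ℝ) : ℂ) = ∫ x, ((h x : ℝ) : ℂ) ∂μ2π from (integral_ofReal).symm]
      apply integral_congr_ae
      filter_upwards [hg, hAg] with x h1 h2
      rw [RCLike.inner_apply, h1, h2, mul_comm ((a x : ℂ) * g x), hptwise x]
    have hInt : Integrable h μ2π := by
      have hφ : Integrable (fun x => (inner ℂ ((F ψ : ℝ → ℂ) x) ((F (A ψ) : ℝ → ℂ) x) : ℂ)) μ2π :=
        MeasureTheory.L2.integrable_inner (𝕜 := ℂ) (F ψ) (F (A ψ))
      have heq : (fun x => ((inner ℂ ((F ψ : ℝ → ℂ) x) ((F (A ψ) : ℝ → ℂ) x) : ℂ)).re)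
          =ᵐ[μ2π] h := by
        filter_upwards [hg, hAg] with x h1 h2
        rw [RCLike.inner_apply, h1, h2, mul_comm ((a x : ℂ) * g x), hptwise x, Complex.ofReal_re]
      exact hφ.re.congr heq
    -- pointwise bound
    have hmes : ∀ᵐ x ∂μ2π, x ∈ Set.Ico 0 (2*Real.pi) := by
      rw [show μ2π = volume.restrict (Set.Ico 0 (2*Real.pi)) from rfl]
      exact ae_restrict_mem measurableSet_Ico
    have hbound : ∀ᵐ x ∂μ2π, h x ≤ C := by
      filter_upwards [hmes] with x hx
      by_cases hmem : x ∈ Set.Icc α ω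
      · rw [hhdef]
        simp only
        rw [hzero x hmem, zero_mul]
        exact hCnonneg
      · -- main estimate
        have hax : a x ≤ 1 := (ha01 x).2
        have hax0 : 0 ≤ a x := (ha01 x).1
        set t : ℝ := x - θ with ht
        have hgx : g x = (∑ l ∈ Finset.range n, Complex.exp ((t:ℂ) * Complex.I) ^ l)
            / ((Real.sqrt n : ℂ) * (Real.sqrt (2*Real.pi) : ℂ)) := by
          rw [hgdef]
          simp only
          have hterm : ∀ l : Fin n,
              u l * (Complex.exp (Complex.I * (l:ℤ) * x) / Real.sqrt (2*Real.pi))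
              = Complex.exp ((t:ℂ) * Complex.I) ^ (l:ℕ)
                / ((Real.sqrt n : ℂ) * (Real.sqrt (2*Real.pi) : ℂ)) := by
            intro l
            rw [hu]
            simp only
            rw [dft_conj, div_mul_div_comm, ← Complex.exp_add, ← Complex.exp_nat_mul]
            congr 1
            rw [ht, hθ]
            push_cast
            have hn0 : (n:ℂ) ≠ 0 := by exact_mod_cast hnR.ne'
            field_simp
            ring
          rw [Finset.sum_congr rfl fun l _ => hterm l, ← Finset.sum_div,
            Fin.sum_univ_eq_sum_range (fun l => Complex.exp ((t:ℂ) * Complex.I) ^ l)]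
        -- location of t
        have hmem' : x < α ∨ ω < x := by
          rw [Set.mem_Icc] at hmem
          push_neg at hmem
          rcases le_or_gt α x with h' | h'
          · exact Or.inr (hmem h')
          · exact Or.inl h'
        have ht1 : δ ≤ |t| ∧ |t| ≤ 2*Real.pi - δ := by
          obtain ⟨hx0, hx2⟩ := hx
          rcases hmem' with h' | h'
          · have h2 : t ≤ -δ := by rw [ht]; linarith [hk.1]
            have h3 : -(2*Real.pi - δ) ≤ t := by rw [ht]; linarith [hk.2]
            rw [abs_of_nonpos (by linarith)]
            constructor <;> linarith
          · have h2 : δ ≤ t := by rw [ht]; linarith [hk.2]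
            have h3 : t ≤ 2*Real.pi - δ := by rw [ht]; linarith [hk.1]
            rw [abs_of_nonneg (by linarith)]
            constructor <;> linarith
        have ht2 : δ/2 ≤ |t/2| ∧ |t/2| ≤ Real.pi - δ/2 := by
          rw [abs_div, abs_of_nonneg (by norm_num : (0:ℝ) ≤ 2)]
          constructor <;> [linarith [ht1.1]; linarith [ht1.2]]
        have hsin : Real.sin (δ/2) ≤ |Real.sin (t/2)| := sin_lower hδ0 ht2.1 ht2.2
        have hsne : Real.sin (t/2) ≠ 0 := by
          intro h0
          rw [h0, abs_zero] at hsin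
          linarith
        have hb := geom_exp_bound n t hsne
        have hgnorm : ‖g x‖ ≤ (1 / Real.sin (δ/2)) / (Real.sqrt n * Real.sqrt (2*Real.pi)) := by
          rw [hgx, norm_div]
          have hden : ‖((Real.sqrt n : ℝ) : ℂ) * ((Real.sqrt (2*Real.pi) : ℝ) : ℂ)‖
              = Real.sqrt n * Real.sqrt (2*Real.pi) := by
            rw [norm_mul, Complex.norm_real, Complex.norm_real, Real.norm_eq_abs,
              Real.norm_eq_abs, abs_of_nonneg (Real.sqrt_nonneg _),
              abs_of_nonneg (Real.sqrt_nonneg _)]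
          rw [hden]
          have hstep : 1 / |Real.sin (t/2)| ≤ 1 / Real.sin (δ/2) :=
            one_div_le_one_div_of_le hsinpos hsin
          have hnum' : ‖∑ l ∈ Finset.range n, Complex.exp ((t:ℂ) * Complex.I) ^ l‖
              ≤ 1 / Real.sin (δ/2) := hb.trans hstep
          gcongr
        have hnormSq : Complex.normSq (g x) ≤ C := by
          rw [hC]
          have h4 : Complex.normSq (g x) = ‖g x‖^2 := by
            rw [Complex.normSq_eq_norm_sq]
          rw [h4]
          have h5 : ((1 / Real.sin (δ/2)) / (Real.sqrt n * Real.sqrt (2*Real.pi)))^2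
              = (1 / Real.sin (δ/2))^2 / (n * (2 * Real.pi)) := by
            rw [div_pow, mul_pow, Real.sq_sqrt (by positivity), Real.sq_sqrt (by positivity)]
          rw [← h5]
          exact pow_le_pow_left₀ (norm_nonneg _) hgnorm 2
        calc h x = a x * Complex.normSq (g x) := rfl
        _ ≤ 1 * C := mul_le_mul hax hnormSq (Complex.normSq_nonneg _) (by norm_num)
        _ = C := one_mul C
    -- integrate the bound
    have hμuniv : (μ2π Set.univ).toReal = 2 * Real.pi := by
      rw [show μ2π = volume.restrict (Set.Ico 0 (2*Real.pi)) from rfl,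
        Measure.restrict_apply_univ, Real.volume_Ico, sub_zero,
        ENNReal.toReal_ofReal (by positivity)]
    have hfin : IsFiniteMeasure μ2π := by
      constructor
      rw [show μ2π = volume.restrict (Set.Ico 0 (2*Real.pi)) from rfl,
        Measure.restrict_apply_univ, Real.volume_Ico]
      exact ENNReal.ofReal_lt_top
    have hIle : ∫ x, h x ∂μ2π ≤ 1/(n * Real.sin (δ/2)^2) := by
      calc ∫ x, h x ∂μ2π ≤ ∫ _x, C ∂μ2π := integral_mono_ae hInt (integrable_const C) hbound
      _ = (μ2π Set.univ).toReal • C := integral_const C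
      _ = (2 * Real.pi) * C := by rw [hμuniv, smul_eq_mul]
      _ = 1/(n * Real.sin (δ/2)^2) := by
          rw [hC]
          field_simp
    refine ⟨∫ x, h x ∂μ2π, ?_, hIle⟩
    rw [← h1, ← LinearIsometryEquiv.inner_map_map F ψ (A ψ), hinner]
  -- assemble
  refine ⟨Eproj_herm n α ω δ, Eproj_idem n hn α ω δ, ?_, ?_⟩
  · rw [Etrace_mul, ← hS, Complex.im_sum]
    apply Finset.sum_eq_zero
    intro k hk
    obtain ⟨I, hIeq, -⟩ := key k hk
    rw [hIeq, Complex.ofReal_im]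
  · rw [Etrace_mul, ← hS, Complex.re_sum, Eproj_trace n hn, ← hS, Complex.natCast_re]
    have hsum : ∑ k ∈ S, ((Pk n k * compressMat A n).trace).re
        ≤ S.card • (1/(n * Real.sin (δ/2)^2)) := by
      apply Finset.sum_le_card_nsmul
      intro k hk
      obtain ⟨I, hIeq, hIle⟩ := key k hk
      rw [hIeq, Complex.ofReal_re]
      exact hIle
    calc ∑ k ∈ S, ((Pk n k * compressMat A n).trace).re
        ≤ S.card • (1/(n * Real.sin (δ/2)^2)) := hsum
    _ = (S.card : ℝ) * (1/(n * Real.sin (δ/2)^2)) := nsmul_eq_mul _ _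
end
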